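/- Let d ≥ 1 and let U, V ⊆ ℝ^d be open, connected, nonempty sets with U ∪ V = ℝ^d. Then U ∩ V is nonempty and connected. -/

import Mathlib

private def mvSteps {E : Type*} (f : E → Bool) (c : ℕ → Bool) (z : ℕ → E) : ℕ → Bool
  | 0 => false
  | i + 1 => xor (mvSteps f c z i) (if c i = c (i + 1) then false else f (z i))

private lemma mvStepsA {E : Type*} (f : E → Bool) (c : ℕ → Bool) (z z' : ℕ → E) (m : ℕ)
    (H : ∀ i < m, c i ≠ c (i + 1) → f (z i) = f (z' i)) :
    mvSteps f c z m = mvSteps f c z' m := by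
  induction m with
  | zero => rfl
  | succ k ih =>
    have hk := ih fun i hi => H i (Nat.lt_succ_of_lt hi)
    simp only [mvSteps, hk]
    by_cases h : c k = c (k + 1)
    · simp [h]
    · rw [H k (Nat.lt_succ_self k) h]

private lemma mvStepsB {E : Type*} (f : E → Bool) (c c' : ℕ → Bool) (z : ℕ → E) (m : ℕ)
    (h0 : c 0 = c' 0)
    (H : ∀ i < m, c (i + 1) ≠ c' (i + 1) → f (z i) = f (z (i + 1))) :
    ∀ k ≤ m, mvSteps f c' z k =
      xor (mvSteps f c z k) (if c k = c' k then false else f (z k)) := by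
  intro k hk
  induction k with
  | zero => simp [mvSteps, h0]
  | succ k ih =>
    have ihk := ih (Nat.le_of_succ_le hk)
    have hH : c (k + 1) ≠ c' (k + 1) → f (z k) = f (z (k + 1)) :=
      H k (Nat.lt_of_succ_le hk)
    simp only [mvSteps, ihk]
    rcases Bool.eq_false_or_eq_true (c k) with h1 | h1 <;>
    rcases Bool.eq_false_or_eq_true (c' k) with h2 | h2 <;>
    rcases Bool.eq_false_or_eq_true (c (k + 1)) with h3 | h3 <;>
    rcases Bool.eq_false_or_eq_true (c' (k + 1)) with h4 | h4 <;>
      simp_all [Bool.xor_assoc, Bool.xor_comm, Bool.xor_left_comm]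

private lemma mvSteps_const {E : Type*} (f : E → Bool) (b : Bool) (z : ℕ → E) (m : ℕ) :
    mvSteps f (fun _ => b) z m = false := by
  induction m with
  | zero => rfl
  | succ k ih => simp [mvSteps, ih]

private lemma mvSteps_etop {E : Type*} (f : E → Bool) (z : ℕ → E) (n : ℕ) (hn : 1 ≤ n) :
    mvSteps f (fun k => if k = 0 then true else if k ≤ n then false else true) z (n + 1)
      = xor (f (z 0)) (f (z n)) := by
  have key : ∀ k, 1 ≤ k → k ≤ n →
      mvSteps f (fun k => if k = 0 then true else if k ≤ n then false else true) z k
        = f (z 0) := by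
    intro k hk1 hkn
    induction k with
    | zero => omega
    | succ k ih =>
      rcases Nat.eq_or_lt_of_le hk1 with h | h
      · obtain rfl : k = 0 := by omega
        simp [mvSteps, hn]
      · have hk : 1 ≤ k := by omega
        have hkn' : k ≤ n := by omega
        have hik := ih hk hkn'
        simp only [mvSteps, hik]
        have h1 : ¬ k = 0 := by omega
        have h2 : ¬ k + 1 = 0 := by omega
        simp [h1, h2, hkn', hkn]
  simp only [mvSteps, key n hn le_rfl]
  have h1 : ¬ n = 0 := by omega
  have h2 : ¬ n + 1 ≤ n := by omega
  simp [h1, h2, hn]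

open Set

/-- Mayer–Vietoris step of Lemma 3.1: if `U, V ⊆ ℝ^d` are open, connected, nonempty
and `U ∪ V = ℝ^d`, then `U ∩ V` is nonempty and connected. -/
theorem stmt_1 (d : ℕ) (hd : 1 ≤ d)
    (U V : Set (EuclideanSpace ℝ (Fin d)))
    (hUopen : IsOpen U) (hVopen : IsOpen V)
    (hUconn : IsConnected U) (hVconn : IsConnected V)
    (hcover : U ∪ V = Set.univ) :
    IsConnected (U ∩ V) := by
  classical
  have hne : (U ∩ V).Nonempty := by
    have h := (isPreconnected_univ (α := EuclideanSpace ℝ (Fin d))) U V hUopen hVopen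
      (by rw [hcover]) ⟨hUconn.nonempty.choose, trivial, hUconn.nonempty.choose_spec⟩
      ⟨hVconn.nonempty.choose, trivial, hVconn.nonempty.choose_spec⟩
    obtain ⟨w, -, hw⟩ := h
    exact ⟨w, hw⟩
  refine ⟨hne, ?_⟩
  by_contra hncon
  rw [IsPreconnected] at hncon
  push_neg at hncon
  obtain ⟨S, T, hSopen, hTopen, hsub, hS, hT, hem0⟩ := hncon
  have hem : ¬(U ∩ V ∩ (S ∩ T)).Nonempty := by
    rw [hem0]; exact Set.not_nonempty_empty
  set f : EuclideanSpace ℝ (Fin d) → Bool := fun w => if w ∈ S then true else false with hf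
  obtain ⟨x, hxUV, hxS⟩ := hS
  obtain ⟨y, hyUV, hyT⟩ := hT
  have hfx : f x = true := by simp [hf, hxS]
  have hfy : f y = false := by
    have : y ∉ S := fun hyS => hem ⟨y, hyUV, hyS, hyT⟩
    simp [hf, this]
  -- local constancy of f on connected subsets of U ∩ V
  have L1 : ∀ K : Set (EuclideanSpace ℝ (Fin d)), IsPreconnected K → K ⊆ U → K ⊆ V →
      ∀ a ∈ K, ∀ b ∈ K, f a = f b := by
    intro K hK hKU hKV a ha b hb
    have hKUV : K ⊆ U ∩ V := fun w hw => ⟨hKU hw, hKV hw⟩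
    have hKsub : K ⊆ S ∪ T := fun w hw => hsub (hKUV hw)
    by_cases hKS : (K ∩ S).Nonempty
    · by_cases hKT : (K ∩ T).Nonempty
      · obtain ⟨w, hwK, hwST⟩ := hK S T hSopen hTopen hKsub hKS hKT
        exact absurd ⟨w, hKUV hwK, hwST⟩ hem
      · have hST : ∀ w ∈ K, w ∈ S := by
          intro w hw
          rcases hKsub hw with h | h
          · exact h
          · exact absurd ⟨w, hw, h⟩ hKT
        simp [hf, hST a ha, hST b hb]
    · have hST : ∀ w ∈ K, w ∉ S := fun w hw hwS => hKS ⟨w, hw, hwS⟩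
      simp [hf, hST a ha, hST b hb]
  -- paths
  have hpc : IsPathConnected U := (hUopen.isConnected_iff_isPathConnected).mp hUconn
  have hqc : IsPathConnected V := (hVopen.isConnected_iff_isPathConnected).mp hVconn
  obtain ⟨p, hp⟩ := hpc.joinedIn x hxUV.1 y hyUV.1
  obtain ⟨q, hq⟩ := hqc.joinedIn x hxUV.2 y hyUV.2
  -- the straight-line homotopy, defined on all of ℝ × ℝ via clamping
  set σ : ℝ → ℝ := fun s => ((Set.projIcc (0:ℝ) 1 zero_le_one s : Set.Icc (0:ℝ) 1) : ℝ) with hσ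
  have hσcont : Continuous σ := continuous_subtype_val.comp continuous_projIcc
  have hσ0 : σ 0 = 0 := by simp [hσ]
  have hσ1 : σ 1 = 1 := by simp [hσ]
  set h : ℝ × ℝ → EuclideanSpace ℝ (Fin d) :=
    fun w => (1 - σ w.1) • p.extend w.2 + σ w.1 • q.extend w.2 with hh
  have hcont : Continuous h := by
    refine Continuous.add ?_ ?_
    · exact (continuous_const.sub (hσcont.comp continuous_fst)).smul
        (p.continuous_extend.comp continuous_snd)
    · exact (hσcont.comp continuous_fst).smul (q.continuous_extend.comp continuous_snd)
  have hxline : ∀ s, h (s, 0) = x := by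
    intro s
    simp only [hh, Path.extend_zero]
    rw [sub_smul, one_smul]
    abel
  have hyline : ∀ s, h (s, 1) = y := by
    intro s
    simp only [hh, Path.extend_one]
    rw [sub_smul, one_smul]
    abel
  have hmemU : ∀ t, h (0, t) ∈ U := by
    intro t
    have h1 : h (0, t) = p.extend t := by simp [hh, hσ0]
    rw [h1]
    have h2 : p.extend t ∈ range p.extend := mem_range_self t
    rw [p.extend_range] at h2
    obtain ⟨t', ht'⟩ := h2
    exact ht' ▸ hp t'
  have hmemV : ∀ t, h (1, t) ∈ V := by
    intro t
    have h1 : h (1, t) = q.extend t := by simp [hh, hσ1]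
    rw [h1]
    have h2 : q.extend t ∈ range q.extend := mem_range_self t
    rw [q.extend_range] at h2
    obtain ⟨t', ht'⟩ := h2
    exact ht' ▸ hq t'
  -- Lebesgue number
  have hrange : ∀ w : ℝ × ℝ, h w ∈ U ∪ V := fun w => by rw [hcover]; trivial
  obtain ⟨δ, hδ, hball⟩ := lebesgue_number_lemma_of_metric
    (isCompact_Icc.prod isCompact_Icc : IsCompact (Icc (0:ℝ) 1 ×ˢ Icc (0:ℝ) 1))
    (c := fun b : Bool => if b then h ⁻¹' U else h ⁻¹' V)
    (fun b => by cases b <;> simp [hVopen.preimage hcont, hUopen.preimage hcont])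
    (fun w _ => by
      rcases hrange w with hw | hw
      · exact mem_iUnion.mpr ⟨true, by simpa using hw⟩
      · exact mem_iUnion.mpr ⟨false, by simpa using hw⟩)
  obtain ⟨n0, hn0⟩ := exists_nat_one_div_lt hδ
  set n : ℕ := n0 + 1 with hn
  have hn1 : 1 ≤ n := Nat.le_add_left 1 n0
  have hN : (0:ℝ) < n := by positivity
  have hnδ : 1 / (n:ℝ) < δ := by
    have : ((n:ℝ)) = (n0:ℝ) + 1 := by push_cast [hn]; ring
    rw [this]; exact hn0
  -- squares
  set sq : ℕ → ℕ → Set (EuclideanSpace ℝ (Fin d)) := fun j i =>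
    h '' (Icc ((j:ℝ)/n) (((j:ℝ)+1)/n) ×ˢ Icc ((i:ℝ)/n) (((i:ℝ)+1)/n)) with hsq
  have Hsq : ∀ j < n, ∀ i < n, sq j i ⊆ U ∨ sq j i ⊆ V := by
    intro j hj i hi
    have hcorner : (((j:ℝ)/n, (i:ℝ)/n) : ℝ × ℝ) ∈ Icc (0:ℝ) 1 ×ˢ Icc (0:ℝ) 1 := by
      refine ⟨⟨by positivity, ?_⟩, by positivity, ?_⟩
      · rw [div_le_one hN]; exact_mod_cast hj.le
      · rw [div_le_one hN]; exact_mod_cast hi.le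
    obtain ⟨b, hb⟩ := hball _ hcorner
    have hsub' : Icc ((j:ℝ)/n) (((j:ℝ)+1)/n) ×ˢ Icc ((i:ℝ)/n) (((i:ℝ)+1)/n) ⊆
        Metric.ball (((j:ℝ)/n, (i:ℝ)/n) : ℝ × ℝ) δ := by
      rintro ⟨s, t⟩ ⟨hs, ht⟩
      rw [Metric.mem_ball, Prod.dist_eq]
      have e1 : dist s ((j:ℝ)/n) < δ := by
        rw [Real.dist_eq, abs_of_nonneg (by linarith [hs.1])]
        have : s - (j:ℝ)/n ≤ 1/n := by
          have := hs.2
          have expand : ((j:ℝ)+1)/n = (j:ℝ)/n + 1/n := by ring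
          linarith [expand ▸ this]
        linarith
      have e2 : dist t ((i:ℝ)/n) < δ := by
        rw [Real.dist_eq, abs_of_nonneg (by linarith [ht.1])]
        have : t - (i:ℝ)/n ≤ 1/n := by
          have := ht.2
          have expand : ((i:ℝ)+1)/n = (i:ℝ)/n + 1/n := by ring
          linarith [expand ▸ this]
        linarith
      exact max_lt e1 e2
    cases b with
    | true =>
      left
      rintro e ⟨w, hw, rfl⟩
      have := hb (hsub' hw)
      simpa using this
    | false =>
      right
      rintro e ⟨w, hw, rfl⟩
      have := hb (hsub' hw)
      simpa using this
  -- colors of grid squares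
  set c : ℕ → ℕ → Bool := fun j i => if sq j i ⊆ U then true else false with hc
  have cU : ∀ j i, c j i = true → sq j i ⊆ U := by
    intro j i h'
    by_cases hs' : sq j i ⊆ U
    · exact hs'
    · simp [hc, hs'] at h'
  have cV : ∀ j, j < n → ∀ i, i < n → c j i = false → sq j i ⊆ V := by
    intro j hj i hi h'
    rcases Hsq j hj i hi with hU' | hV'
    · simp [hc, hU'] at h'
    · exact hV'
  -- grid vertices
  set zl : ℕ → ℕ → EuclideanSpace ℝ (Fin d) := fun j i => h ((j:ℝ)/n, (i:ℝ)/n) with hzl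
  set ec : (ℕ → Bool) → ℕ → Bool := fun r k =>
    if k = 0 then true else if k ≤ n then r (k-1) else true with hec
  have zl0 : ∀ j, zl j 0 = x := by
    intro j
    have : ((0:ℕ):ℝ)/n = 0 := by norm_num
    rw [hzl]; simp only []; rw [this]; exact hxline _
  have zln : ∀ j, zl j n = y := by
    intro j
    have : ((n:ℕ):ℝ)/n = 1 := div_self hN.ne'
    rw [hzl]; simp only []; rw [this]; exact hyline _
  have hdle : ∀ a b : ℝ, a ≤ b → a/(n:ℝ) ≤ b/(n:ℝ) := fun a b hab =>
    (div_le_div_iff_of_pos_right hN).mpr hab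
  have edge_facts : ∀ R : Set (ℝ × ℝ), IsPreconnected R → ∀ w1 ∈ R, ∀ w2 ∈ R,
      h '' R ⊆ U → h '' R ⊆ V → f (h w1) = f (h w2) := by
    intro R hR w1 h1 w2 h2 hRU hRV
    exact L1 _ (hR.image h hcont.continuousOn) hRU hRV _
      (Set.mem_image_of_mem h h1) _ (Set.mem_image_of_mem h h2)
  -- vertical interior edges within a row of squares
  have hedgeV : ∀ j, j < n → ∀ i, i + 1 < n → c j i ≠ c j (i+1) →
      f (zl j (i+1)) = f (zl (j+1) (i+1)) := by
    intro j hj i hi hcc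
    have hcast : ((i+1:ℕ):ℝ) = (i:ℝ)+1 := by push_cast; ring
    have hcastj : ((j+1:ℕ):ℝ) = (j:ℝ)+1 := by push_cast; ring
    set R : Set (ℝ × ℝ) := Icc ((j:ℝ)/n) (((j:ℝ)+1)/n) ×ˢ {((i+1:ℕ):ℝ)/n} with hR
    have hRpre : IsPreconnected R := isPreconnected_Icc.prod isPreconnected_singleton
    have hsub1 : R ⊆ Icc ((j:ℝ)/n) (((j:ℝ)+1)/n) ×ˢ Icc ((i:ℝ)/n) (((i:ℝ)+1)/n) := by
      rintro ⟨s, t⟩ ⟨hs, rfl⟩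
      exact ⟨hs, by rw [hcast]; exact hdle _ _ (by linarith), by rw [hcast]⟩
    have hsub2 : R ⊆ Icc ((j:ℝ)/n) (((j:ℝ)+1)/n) ×ˢ
        Icc (((i+1:ℕ):ℝ)/n) ((((i+1:ℕ):ℝ)+1)/n) := by
      rintro ⟨s, t⟩ ⟨hs, rfl⟩
      exact ⟨hs, le_rfl, hdle _ _ (by linarith)⟩
    have himg1 : h '' R ⊆ sq j i := Set.image_mono hsub1
    have himg2 : h '' R ⊆ sq j (i+1) := Set.image_mono hsub2
    have hm1 : (((j:ℝ)/n, ((i+1:ℕ):ℝ)/n) : ℝ × ℝ) ∈ R :=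
      ⟨⟨le_rfl, hdle _ _ (by linarith)⟩, rfl⟩
    have hm2 : ((((j+1:ℕ):ℝ)/n, ((i+1:ℕ):ℝ)/n) : ℝ × ℝ) ∈ R :=
      ⟨⟨by rw [hcastj]; exact hdle _ _ (by linarith), by rw [hcastj]⟩, rfl⟩
    have hUV : h '' R ⊆ U ∧ h '' R ⊆ V := by
      rcases Bool.eq_false_or_eq_true (c j i) with h1 | h1
      · have h2 : c j (i+1) = false := by
          rcases Bool.eq_false_or_eq_true (c j (i+1)) with h2 | h2
          · exact absurd (by rw [h1, h2]) hcc
          · exact h2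
        exact ⟨himg1.trans (cU _ _ h1), himg2.trans (cV j hj (i+1) hi h2)⟩
      · have h2 : c j (i+1) = true := by
          rcases Bool.eq_false_or_eq_true (c j (i+1)) with h2 | h2
          · exact h2
          · exact absurd (by rw [h1, h2]) hcc
        exact ⟨himg2.trans (cU _ _ h2), himg1.trans (cV j hj i (by omega) h1)⟩
    exact edge_facts R hRpre _ hm1 _ hm2 hUV.1 hUV.2
  -- horizontal edges between consecutive rows of squares
  have hedgeH : ∀ j, j + 1 < n → ∀ i, i < n → c j i ≠ c (j+1) i →
      f (zl (j+1) i) = f (zl (j+1) (i+1)) := by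
    intro j hj i hi hcc
    have hcast : ((i+1:ℕ):ℝ) = (i:ℝ)+1 := by push_cast; ring
    have hcastj : ((j+1:ℕ):ℝ) = (j:ℝ)+1 := by push_cast; ring
    set R : Set (ℝ × ℝ) := {((j+1:ℕ):ℝ)/n} ×ˢ Icc ((i:ℝ)/n) (((i:ℝ)+1)/n) with hR
    have hRpre : IsPreconnected R := isPreconnected_singleton.prod isPreconnected_Icc
    have hsub1 : R ⊆ Icc ((j:ℝ)/n) (((j:ℝ)+1)/n) ×ˢ Icc ((i:ℝ)/n) (((i:ℝ)+1)/n) := by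
      rintro ⟨s, t⟩ ⟨rfl, ht⟩
      exact ⟨⟨by rw [hcastj]; exact hdle _ _ (by linarith), by rw [hcastj]⟩, ht⟩
    have hsub2 : R ⊆ Icc (((j+1:ℕ):ℝ)/n) ((((j+1:ℕ):ℝ)+1)/n) ×ˢ
        Icc ((i:ℝ)/n) (((i:ℝ)+1)/n) := by
      rintro ⟨s, t⟩ ⟨rfl, ht⟩
      exact ⟨⟨le_rfl, hdle _ _ (by linarith)⟩, ht⟩
    have himg1 : h '' R ⊆ sq j i := Set.image_mono hsub1
    have himg2 : h '' R ⊆ sq (j+1) i := Set.image_mono hsub2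
    have hm1 : ((((j+1:ℕ):ℝ)/n, (i:ℝ)/n) : ℝ × ℝ) ∈ R :=
      ⟨rfl, le_rfl, hdle _ _ (by linarith)⟩
    have hm2 : ((((j+1:ℕ):ℝ)/n, ((i+1:ℕ):ℝ)/n) : ℝ × ℝ) ∈ R :=
      ⟨rfl, by rw [hcast]; exact hdle _ _ (by linarith), by rw [hcast]⟩
    have hUV : h '' R ⊆ U ∧ h '' R ⊆ V := by
      rcases Bool.eq_false_or_eq_true (c j i) with h1 | h1
      · have h2 : c (j+1) i = false := by
          rcases Bool.eq_false_or_eq_true (c (j+1) i) with h2 | h2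
          · exact absurd (by rw [h1, h2]) hcc
          · exact h2
        exact ⟨himg1.trans (cU _ _ h1), himg2.trans (cV (j+1) hj i hi h2)⟩
      · have h2 : c (j+1) i = true := by
          rcases Bool.eq_false_or_eq_true (c (j+1) i) with h2 | h2
          · exact h2
          · exact absurd (by rw [h1, h2]) hcc
        exact ⟨himg2.trans (cU _ _ h2), himg1.trans (cV j (by omega) i hi h1)⟩
    exact edge_facts R hRpre _ hm1 _ hm2 hUV.1 hUV.2
  -- bottom boundary edges (line 0, inside U)
  have hbot' : ∀ i, i < n → c 0 i = false → f (zl 0 i) = f (zl 0 (i+1)) := by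
    intro i hi h0
    have hcast : ((i+1:ℕ):ℝ) = (i:ℝ)+1 := by push_cast; ring
    set R : Set (ℝ × ℝ) := {(0:ℝ)} ×ˢ Icc ((i:ℝ)/n) (((i:ℝ)+1)/n) with hR
    have hRpre : IsPreconnected R := isPreconnected_singleton.prod isPreconnected_Icc
    have hsub1 : R ⊆ Icc (((0:ℕ):ℝ)/n) ((((0:ℕ):ℝ)+1)/n) ×ˢ Icc ((i:ℝ)/n) (((i:ℝ)+1)/n) := by
      rintro ⟨s, t⟩ ⟨rfl, ht⟩
      refine ⟨⟨?_, ?_⟩, ht⟩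
      · norm_num
      · norm_num
    have himg1 : h '' R ⊆ sq 0 i := Set.image_mono hsub1
    have himgU : h '' R ⊆ U := by
      rintro e ⟨⟨s, t⟩, ⟨rfl, ht⟩, rfl⟩
      exact hmemU t
    have hm1 : (((0:ℕ):ℝ)/n, ((i:ℕ):ℝ)/n) ∈ R :=
      ⟨by norm_num, le_rfl, hdle _ _ (by linarith)⟩
    have hm2 : (((0:ℕ):ℝ)/n, ((i+1:ℕ):ℝ)/n) ∈ R :=
      ⟨by norm_num, by rw [hcast]; exact hdle _ _ (by linarith), by rw [hcast]⟩
    exact edge_facts R hRpre _ hm1 _ hm2 himgU (himg1.trans (cV 0 (by omega) i hi h0))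
  -- top boundary edges (line n, inside V)
  have htop' : ∀ i, i < n → c (n-1) i = true → f (zl n i) = f (zl n (i+1)) := by
    intro i hi h0
    have hcast : ((i+1:ℕ):ℝ) = (i:ℝ)+1 := by push_cast; ring
    have hcastn : ((n:ℕ):ℝ)/n = 1 := div_self hN.ne'
    have hcastn1 : (((n-1:ℕ)):ℝ) = (n:ℝ) - 1 := by
      rw [Nat.cast_sub hn1]; norm_num
    set R : Set (ℝ × ℝ) := {(1:ℝ)} ×ˢ Icc ((i:ℝ)/n) (((i:ℝ)+1)/n) with hR
    have hRpre : IsPreconnected R := isPreconnected_singleton.prod isPreconnected_Icc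
    have hsub1 : R ⊆ Icc (((n-1:ℕ):ℝ)/n) ((((n-1:ℕ):ℝ)+1)/n) ×ˢ
        Icc ((i:ℝ)/n) (((i:ℝ)+1)/n) := by
      rintro ⟨s, t⟩ ⟨rfl, ht⟩
      refine ⟨⟨?_, ?_⟩, ht⟩
      · rw [hcastn1, div_le_one hN]; linarith
      · rw [hcastn1]
        have : ((n:ℝ) - 1 + 1)/n = 1 := by
          field_simp
          ring
        rw [this]
    have himg1 : h '' R ⊆ sq (n-1) i := Set.image_mono hsub1
    have himgV : h '' R ⊆ V := by
      rintro e ⟨⟨s, t⟩, ⟨rfl, ht⟩, rfl⟩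
      exact hmemV t
    have hm1 : (((n:ℕ):ℝ)/n, ((i:ℕ):ℝ)/n) ∈ R :=
      ⟨by rw [hcastn]; rfl, le_rfl, hdle _ _ (by linarith)⟩
    have hm2 : (((n:ℕ):ℝ)/n, ((i+1:ℕ):ℝ)/n) ∈ R :=
      ⟨by rw [hcastn]; rfl, by rw [hcast]; exact hdle _ _ (by linarith), by rw [hcast]⟩
    exact edge_facts R hRpre _ hm1 _ hm2 (himg1.trans (cU _ _ h0)) himgV
  -- the monodromy chain
  have ecend : ∀ r : ℕ → Bool, ec r (n+1) = true := by
    intro r; simp [hec, Nat.succ_le_iff]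
  have ec0 : ∀ r : ℕ → Bool, ec r 0 = true := by intro r; simp [hec]
  have ecmid : ∀ (r : ℕ → Bool) (i : ℕ), i < n → ec r (i+1) = r i := by
    intro r i hi
    simp [hec, Nat.succ_le_iff.mpr hi]
  -- moving up one line within a row (same colors)
  have mainA : ∀ j, j < n →
      mvSteps f (ec (c j)) (zl j) (n+1) = mvSteps f (ec (c j)) (zl (j+1)) (n+1) := by
    intro j hj
    apply mvStepsA
    intro i hi hcc
    rcases Nat.eq_zero_or_pos i with rfl | hpos
    · rw [zl0 j, zl0 (j+1)]
    rcases eq_or_lt_of_le (Nat.lt_succ_iff.mp hi) with rfl | hin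
    · rw [zln j, zln (j+1)]
    · obtain ⟨i', rfl⟩ : ∃ i', i = i' + 1 := ⟨i - 1, by omega⟩
      have e1 : ec (c j) (i'+1) = c j i' := ecmid _ _ (by omega)
      have e2 : ec (c j) (i'+1+1) = c j (i'+1) := ecmid _ _ (by omega)
      rw [e1, e2] at hcc
      exact hedgeV j hj i' (by omega) hcc
  -- changing row colors along a shared line
  have mainB : ∀ j, j + 1 < n →
      mvSteps f (ec (c j)) (zl (j+1)) (n+1) = mvSteps f (ec (c (j+1))) (zl (j+1)) (n+1) := by
    intro j hj
    have hH : ∀ i, i < n + 1 → ec (c j) (i+1) ≠ ec (c (j+1)) (i+1) →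
        f (zl (j+1) i) = f (zl (j+1) (i+1)) := by
      intro i hi hcc
      by_cases hin : i < n
      · rw [ecmid _ _ hin, ecmid _ _ hin] at hcc
        exact hedgeH j hj i hin hcc
      · obtain rfl : i = n := by omega
        rw [ecend, ecend] at hcc
        exact absurd rfl hcc
    have hB := mvStepsB f (ec (c j)) (ec (c (j+1))) (zl (j+1)) (n+1)
      (by rw [ec0, ec0]) hH (n+1) le_rfl
    rw [hB, ecend, ecend, if_pos rfl, Bool.xor_false]
  -- base: bottom line with all-U colors
  have base : mvSteps f (ec (c 0)) (zl 0) (n+1) = false := by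
    have hH : ∀ i, i < n + 1 → (fun _ => true) (i+1) ≠ ec (c 0) (i+1) →
        f (zl 0 i) = f (zl 0 (i+1)) := by
      intro i hi hcc
      by_cases hin : i < n
      · rw [ecmid _ _ hin] at hcc
        have : c 0 i = false := by
          rcases Bool.eq_false_or_eq_true (c 0 i) with h2 | h2
          · exact absurd h2.symm hcc
          · exact h2
        exact hbot' i hin this
      · obtain rfl : i = n := by omega
        rw [ecend] at hcc
        exact absurd rfl hcc
    have hB := mvStepsB f (fun _ => true) (ec (c 0)) (zl 0) (n+1) (by rw [ec0]) hH (n+1) le_rfl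
    rw [hB, mvSteps_const, ecend, if_pos rfl, Bool.xor_false]
  -- induction up the rows
  have main : ∀ j, j < n → mvSteps f (ec (c j)) (zl (j+1)) (n+1) = false := by
    intro j
    induction j with
    | zero => intro hj; rw [← mainA 0 hj]; exact base
    | succ k ih =>
      intro hj
      rw [← mainA (k+1) hj, ← mainB k hj]
      exact ih (by omega)
  have hfin1 : mvSteps f (ec (c (n-1))) (zl n) (n+1) = false := by
    have := main (n-1) (by omega)
    rw [show n - 1 + 1 = n from by omega] at this
    exact this
  -- switch to all-V colors on the top line
  have hfin2 : mvSteps f (ec (fun _ => false)) (zl n) (n+1) = false := by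
    have ecfend : ec (fun _ : ℕ => false) (n+1) = true := ecend (fun _ => false)
    have ecf0 : ec (fun _ : ℕ => false) 0 = true := ec0 (fun _ => false)
    have ecfmid : ∀ i, i < n → ec (fun _ : ℕ => false) (i+1) = false :=
      fun i hi => ecmid (fun _ => false) i hi
    have hH : ∀ i, i < n + 1 → ec (c (n-1)) (i+1) ≠ ec (fun _ => false) (i+1) →
        f (zl n i) = f (zl n (i+1)) := by
      intro i hi hcc
      by_cases hin : i < n
      · rw [ecmid _ _ hin, ecfmid i hin] at hcc
        have : c (n-1) i = true := by
          rcases Bool.eq_false_or_eq_true (c (n-1) i) with h2 | h2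
          · exact h2
          · exact absurd h2 hcc
        exact htop' i hin this
      · obtain rfl : i = n := by omega
        rw [ecend, ecfend] at hcc
        exact absurd rfl hcc
    have hB := mvStepsB f (ec (c (n-1))) (ec (fun _ => false)) (zl n) (n+1)
      (by rw [ec0, ecf0]) hH (n+1) le_rfl
    rw [hB, hfin1, ecend, ecfend, if_pos rfl, Bool.xor_false]
  -- compute the top-line monodromy
  have hval : mvSteps f (ec (fun _ => false)) (zl n) (n+1) = xor (f (zl n 0)) (f (zl n n)) := by
    have hfe : ec (fun _ => false) = fun k => if k = 0 then true else if k ≤ n then false else true := by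
      funext k
      simp [hec]
    rw [hfe]
    exact mvSteps_etop f (zl n) n hn1
  rw [hval, zl0, zln, hfx, hfy] at hfin2
  simp at hfin2
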